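/- Let V be a unitary operator on a Hilbert space H and suppose for some δ > 0 and a sequence n_t → ∞ that V^{n_t} converges to δ(I + V*) in the weak operator topology. Then for every vector v and every ε > 0, |⟨V^{n_t} v, v⟩| converges to δ|⟨v,v⟩ + ⟨V* v, v⟩|; in particular if moreover ‖v‖ = 1 and V v = λ v with |λ| = 1, then |1 + λ̄| = 1/δ · limit, forcing δ(1 + |λ̄|) ≥ 1, i.e., 2δ ≥ 1 whenever V has an eigenvector. Hence if δ < 1/2, V has no eigenvectors (continuous spectrum). -/

import Mathlib

open Filter
open scoped Topology

/-- If a unitary `V` satisfies `V^{n_t} → δ (I + V*)` weakly with `δ > 0`,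
then `|⟨V^{n_t} v, v⟩| → δ |⟨v,v⟩ + ⟨V* v, v⟩|` for every `v`; and if
moreover `δ < 1/2` then `V` has no eigenvectors. -/
theorem weak_limit_no_eigenvectors
    {H : Type*} [NormedAddCommGroup H] [InnerProductSpace ℂ H]
    [CompleteSpace H]
    (V : H →L[ℂ] H) (hV : V ∈ unitary (H →L[ℂ] H))
    (δ : ℝ) (hδ : 0 < δ)
    (n : ℕ → ℕ) (hn : Tendsto n atTop atTop)
    (hlim : ∀ u w : H, Tendsto (fun t => (inner ℂ ((V ^ n t) u) w : ℂ)) atTop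
      (𝓝 ((δ : ℂ) * ((inner ℂ u w : ℂ) + (inner ℂ ((star V) u) w : ℂ))))) :
    (∀ v : H, Tendsto (fun t => ‖(inner ℂ ((V ^ n t) v) v : ℂ)‖) atTop
      (𝓝 (δ * ‖(inner ℂ v v : ℂ) + (inner ℂ ((star V) v) v : ℂ)‖))) ∧
    (δ < 1 / 2 → ∀ (v : H) (lam : ℂ), v ≠ 0 → ‖lam‖ = 1 →
      V v = lam • v → False) := by
  have key : ∀ v : H, Tendsto (fun t => ‖(inner ℂ ((V ^ n t) v) v : ℂ)‖) atTop
      (𝓝 (δ * ‖(inner ℂ v v : ℂ) + (inner ℂ ((star V) v) v : ℂ)‖)) := by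
    intro v
    have h := (hlim v v).norm
    have : ‖(δ : ℂ) * ((inner ℂ v v : ℂ) + (inner ℂ ((star V) v) v : ℂ))‖
        = δ * ‖(inner ℂ v v : ℂ) + (inner ℂ ((star V) v) v : ℂ)‖ := by
      rw [norm_mul, Complex.norm_real, Real.norm_of_nonneg hδ.le]
    rwa [this] at h
  refine ⟨key, ?_⟩
  intro hδ2 v lam hv hlam hev
  have hlam0 : lam ≠ 0 := by
    intro h; rw [h] at hlam; simp at hlam
  -- V^k v = lam^k • v
  have hpow : ∀ k : ℕ, (V ^ k) v = lam ^ k • v := by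
    intro k
    induction k with
    | zero => simp
    | succ k ih =>
      rw [pow_succ, pow_succ, ContinuousLinearMap.mul_apply, hev, map_smul, ih,
        smul_smul, mul_comm]
  -- star V v = lam⁻¹ • v
  have hstar : (star V) v = lam⁻¹ • v := by
    have h1 : (star V) (V v) = v := by
      have := Unitary.star_mul_self_of_mem hV
      have := congrArg (fun (A : H →L[ℂ] H) => A v) this
      simpa [ContinuousLinearMap.mul_apply] using this
    rw [hev, map_smul] at h1
    calc (star V) v = lam⁻¹ • (lam • (star V) v) := by
          rw [smul_smul, inv_mul_cancel₀ hlam0, one_smul]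
      _ = lam⁻¹ • v := by rw [h1]
  -- the function is constantly ‖v‖^2
  have hconst : ∀ t : ℕ, ‖(inner ℂ ((V ^ n t) v) v : ℂ)‖ = ‖v‖ ^ 2 := by
    intro t
    rw [hpow, inner_smul_left, norm_mul, RCLike.norm_conj, norm_pow, hlam,
      one_pow, one_mul, inner_self_eq_norm_sq_to_K]
    simp [Complex.norm_real]
  have hlim1 : Tendsto (fun t => ‖(inner ℂ ((V ^ n t) v) v : ℂ)‖) atTop (𝓝 (‖v‖ ^ 2)) := by
    simp only [hconst]; exact tendsto_const_nhds
  have heq : ‖v‖ ^ 2 = δ * ‖(inner ℂ v v : ℂ) + (inner ℂ ((star V) v) v : ℂ)‖ :=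
    tendsto_nhds_unique hlim1 (key v)
  -- compute the RHS bound
  have hinner : ‖(inner ℂ v v : ℂ) + (inner ℂ ((star V) v) v : ℂ)‖ ≤ 2 * ‖v‖ ^ 2 := by
    rw [hstar, inner_smul_left]
    calc ‖(inner ℂ v v : ℂ) + (starRingEnd ℂ) lam⁻¹ * (inner ℂ v v : ℂ)‖
        ≤ ‖(inner ℂ v v : ℂ)‖ + ‖(starRingEnd ℂ) lam⁻¹ * (inner ℂ v v : ℂ)‖ := norm_add_le _ _
      _ = ‖v‖ ^ 2 + ‖v‖ ^ 2 := by
          rw [norm_mul, RCLike.norm_conj, norm_inv, hlam, inv_one, one_mul,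
            inner_self_eq_norm_sq_to_K]
          simp [Complex.norm_real]
      _ = 2 * ‖v‖ ^ 2 := by ring
  have hvpos : 0 < ‖v‖ ^ 2 := pow_pos (norm_pos_iff.mpr hv) 2
  have : ‖v‖ ^ 2 < ‖v‖ ^ 2 := by
    calc ‖v‖ ^ 2 = δ * ‖(inner ℂ v v : ℂ) + (inner ℂ ((star V) v) v : ℂ)‖ := heq
      _ ≤ δ * (2 * ‖v‖ ^ 2) := by
          exact mul_le_mul_of_nonneg_left hinner hδ.le
      _ < (1/2) * (2 * ‖v‖ ^ 2) := by
          apply mul_lt_mul_of_pos_right hδ2; linarith [hvpos]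
      _ = ‖v‖ ^ 2 := by ring
  exact absurd this (lt_irrefl _)
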